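/- Let X ∈ L²_ℙ(Ω;ℝ^d) and u ∈ L²_ℙ(Ω;ℝ^k), and let L : ℝ^d × ℝ^k → ℝ be continuous, with v ↦ L(x,v) convex for every x ∈ ℝ^d, and satisfying the growth bound |L(x,v)| ≤ C(1 + |x|² + |v|²) for some constant C ≥ 0 and all (x,v). Then ∫_Ω L(X(ω), 𝔼[u|σ(X)](ω)) dℙ(ω) ≤ ∫_Ω L(X(ω), u(ω)) dℙ(ω). -/

import Mathlib

open MeasureTheory

set_option maxHeartbeats 1000000 in
/-- Conditional Jensen inequality: replacing the control by its conditional expectation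
with respect to `σ(X)` decreases the expected cost, for a running cost `L(x,v)` that is
continuous, convex in `v`, and of quadratic growth. -/
theorem integral_comp_condexp_le
    {Ω : Type*} [MeasurableSpace Ω] {d k : ℕ}
    (ℙ : Measure Ω) [IsProbabilityMeasure ℙ]
    (X : Ω → EuclideanSpace ℝ (Fin d)) (hXm : Measurable X) (hX : MemLp X 2 ℙ)
    (u : Ω → EuclideanSpace ℝ (Fin k)) (hu : MemLp u 2 ℙ)
    (L : EuclideanSpace ℝ (Fin d) → EuclideanSpace ℝ (Fin k) → ℝ)
    (hLc : Continuous fun p : EuclideanSpace ℝ (Fin d) × EuclideanSpace ℝ (Fin k) => L p.1 p.2)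
    (hLconv : ∀ x, ConvexOn ℝ Set.univ (L x))
    (C : ℝ) (hC : 0 ≤ C)
    (hgrowth : ∀ x v, |L x v| ≤ C * (1 + ‖x‖ ^ 2 + ‖v‖ ^ 2)) :
    ∫ ω, L (X ω) ((ℙ[u | MeasurableSpace.comap X inferInstance]) ω) ∂ℙ
      ≤ ∫ ω, L (X ω) (u ω) ∂ℙ := by
  classical
  have hm : MeasurableSpace.comap X inferInstance ≤ ‹MeasurableSpace Ω› := hXm.comap_le
  haveI : SigmaFinite (ℙ.trim hm) := by
    have h1 : IsFiniteMeasure (ℙ.trim hm) := by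
      constructor
      rw [trim_measurableSet_eq hm MeasurableSet.univ]
      exact measure_lt_top ℙ _
    infer_instance
  set κ := ProbabilityTheory.condDistrib u X ℙ with hκ_def
  have hXa : AEMeasurable X ℙ := hXm.aemeasurable
  have hua : AEMeasurable u ℙ := hu.1.aemeasurable
  have hpair : AEMeasurable (fun ω => (X ω, u ω)) ℙ := hXa.prodMk hua
  have hu1 : Integrable u ℙ := hu.integrable one_le_two
  -- square-integrability of norms
  have hXsq : Integrable (fun ω => ‖X ω‖ ^ 2) ℙ := by
    have h := hX.integrable_norm_rpow two_ne_zero ENNReal.ofNat_ne_top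
    simpa [ENNReal.toReal_ofNat, Real.rpow_natCast] using h
  have husq : Integrable (fun ω => ‖u ω‖ ^ 2) ℙ := by
    have h := hu.integrable_norm_rpow two_ne_zero ENNReal.ofNat_ne_top
    simpa [ENNReal.toReal_ofNat, Real.rpow_natCast] using h
  -- integrability of the cost
  have hLXu_meas : AEStronglyMeasurable (fun ω => L (X ω) (u ω)) ℙ :=
    hLc.comp_aestronglyMeasurable (hX.1.prodMk hu.1)
  have hbound_int : Integrable (fun ω => C * (1 + ‖X ω‖ ^ 2 + ‖u ω‖ ^ 2)) ℙ :=
    (((integrable_const (1 : ℝ)).add hXsq).add husq).const_mul C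
  have hLXu_int : Integrable (fun ω => L (X ω) (u ω)) ℙ := by
    refine Integrable.mono' hbound_int hLXu_meas ?_
    filter_upwards with ω
    simpa [Real.norm_eq_abs] using hgrowth (X ω) (u ω)
  -- integrability over the joint law
  have hf_int_map : Integrable (fun p : EuclideanSpace ℝ (Fin d) × EuclideanSpace ℝ (Fin k) =>
      L p.1 p.2) (ℙ.map fun ω => (X ω, u ω)) :=
    (integrable_map_measure hLc.aestronglyMeasurable hpair).mpr hLXu_int
  have hsnd_int_map : Integrable (fun p : EuclideanSpace ℝ (Fin d) × EuclideanSpace ℝ (Fin k) =>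
      p.2) (ℙ.map fun ω => (X ω, u ω)) :=
    (integrable_map_measure continuous_snd.aestronglyMeasurable hpair).mpr hu1
  have hnsq_int_map : Integrable (fun p : EuclideanSpace ℝ (Fin d) × EuclideanSpace ℝ (Fin k) =>
      ‖p.2‖ ^ 2) (ℙ.map fun ω => (X ω, u ω)) :=
    (integrable_map_measure ((continuous_snd.norm.pow 2).aestronglyMeasurable) hpair).mpr husq
  -- a.e. integrability under the conditional distribution
  have h1 : ∀ᵐ ω ∂ℙ, Integrable (fun y => y) (κ (X ω)) := hsnd_int_map.condDistrib_ae hXa hua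
  have h2 : ∀ᵐ ω ∂ℙ, Integrable (fun y => L (X ω) y) (κ (X ω)) :=
    hf_int_map.condDistrib_ae hXa hua
  have h3 : ∀ᵐ ω ∂ℙ, Integrable (fun y => ‖y‖ ^ 2) (κ (X ω)) :=
    hnsq_int_map.condDistrib_ae hXa hua
  -- identification of the conditional expectation
  have hw : ℙ[u | MeasurableSpace.comap X inferInstance] =ᵐ[ℙ] fun ω => ∫ y, y ∂κ (X ω) :=
    ProbabilityTheory.condExp_ae_eq_integral_condDistrib' hXm hu1
  have hcond : ℙ[(fun ω => L (X ω) (u ω)) | MeasurableSpace.comap X inferInstance] =ᵐ[ℙ] fun ω => ∫ y, L (X ω) y ∂κ (X ω) :=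
    ProbabilityTheory.condExp_prod_ae_eq_integral_condDistrib' hXm hua hf_int_map
  -- right-hand side as an iterated integral
  have hRHS : ∫ ω, L (X ω) (u ω) ∂ℙ = ∫ ω, (∫ y, L (X ω) y ∂κ (X ω)) ∂ℙ := by
    rw [← integral_condExp hm (f := fun ω => L (X ω) (u ω))]
    exact integral_congr_ae hcond
  -- pointwise Jensen inequality
  have hae : ∀ᵐ ω ∂ℙ, L (X ω) (∫ y, y ∂κ (X ω)) ≤ ∫ y, L (X ω) y ∂κ (X ω) := by
    filter_upwards [h1, h2] with ω hi1 hi2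
    have hgc : Continuous fun y => L (X ω) y := hLc.comp (Continuous.prodMk_right (X ω))
    exact (hLconv (X ω)).map_integral_le hgc.continuousOn isClosed_univ
      (Filter.Eventually.of_forall fun _ => Set.mem_univ _) hi1 hi2
  -- integrability of the left-hand side integrand
  have hint_nsq : Integrable (fun ω => ∫ y, ‖y‖ ^ 2 ∂κ (X ω)) ℙ :=
    hnsq_int_map.integral_condDistrib hXa hua
  have hw_meas : AEStronglyMeasurable (fun ω => ∫ y, (y : EuclideanSpace ℝ (Fin k)) ∂κ (X ω)) ℙ :=
    hsnd_int_map.1.integral_condDistrib hXa hua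
  have hLw_meas : AEStronglyMeasurable (fun ω => L (X ω) (∫ y, y ∂κ (X ω))) ℙ :=
    hLc.comp_aestronglyMeasurable (hX.1.prodMk hw_meas)
  have hLw_bound : ∀ᵐ ω ∂ℙ, ‖L (X ω) (∫ y, y ∂κ (X ω))‖ ≤
      C * (1 + ‖X ω‖ ^ 2 + ∫ y, ‖y‖ ^ 2 ∂κ (X ω)) := by
    filter_upwards [h1, h3] with ω hi1 hi3
    have hsq : ‖∫ y, y ∂κ (X ω)‖ ^ 2 ≤ ∫ y, ‖y‖ ^ 2 ∂κ (X ω) := by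
      have hn : ‖∫ y, y ∂κ (X ω)‖ ≤ ∫ y, ‖y‖ ∂κ (X ω) := norm_integral_le_integral_norm _
      have hj : (∫ y, ‖y‖ ∂κ (X ω)) ^ 2 ≤ ∫ y, ‖y‖ ^ 2 ∂κ (X ω) := by
        have := (convexOn_pow (𝕜 := ℝ) 2).map_integral_le (μ := κ (X ω))
          (f := fun y => ‖y‖) ((continuous_pow 2).continuousOn) isClosed_Ici
          (Filter.Eventually.of_forall fun y => norm_nonneg y) hi1.norm hi3
        exact this
      calc ‖∫ y, y ∂κ (X ω)‖ ^ 2 ≤ (∫ y, ‖y‖ ∂κ (X ω)) ^ 2 :=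
            pow_le_pow_left₀ (norm_nonneg _) hn 2
        _ ≤ _ := hj
    have := hgrowth (X ω) (∫ y, y ∂κ (X ω))
    rw [Real.norm_eq_abs]
    refine this.trans ?_
    have : (1 + ‖X ω‖ ^ 2 + ‖∫ y, y ∂κ (X ω)‖ ^ 2) ≤
        (1 + ‖X ω‖ ^ 2 + ∫ y, ‖y‖ ^ 2 ∂κ (X ω)) := by linarith
    exact mul_le_mul_of_nonneg_left this hC
  have hLw_int : Integrable (fun ω => L (X ω) (∫ y, y ∂κ (X ω))) ℙ :=
    Integrable.mono' ((((integrable_const (1 : ℝ)).add hXsq).add hint_nsq).const_mul C)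
      hLw_meas hLw_bound
  calc ∫ ω, L (X ω) ((ℙ[u | MeasurableSpace.comap X inferInstance]) ω) ∂ℙ
      = ∫ ω, L (X ω) (∫ y, y ∂κ (X ω)) ∂ℙ := by
        refine integral_congr_ae ?_
        filter_upwards [hw] with ω hω
        rw [hω]
    _ ≤ ∫ ω, (∫ y, L (X ω) y ∂κ (X ω)) ∂ℙ :=
        integral_mono_ae hLw_int (hf_int_map.integral_condDistrib hXa hua) hae
    _ = ∫ ω, L (X ω) (u ω) ∂ℙ := hRHS.symm
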